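/- Let C : ℕ → ℝ satisfy C_n ≥ 0 for all n ≥ 1, let 0 < s < t and 0 < b < a be reals, and suppose the series R(x) = Σ_{n=1}^∞ C_n x^{n−1} converges absolutely at x = s/a, s/b, t/a, and t/b. Then R(s/b)·R(t/a) ≤ R(t/b)·R(s/a). -/

import Mathlib

set_option maxHeartbeats 800000

private lemma key_prod (s t a b : ℝ) (hs : 0 < s) (hst : s ≤ t) (hb : 0 < b) (hba : b ≤ a)
    (m n : ℕ) :
    0 ≤ (t ^ m * s ^ n - s ^ m * t ^ n) * (b ^ n * a ^ m - b ^ m * a ^ n) := by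
  have aux : ∀ (u v : ℝ), 0 < u → u ≤ v → ∀ p q : ℕ, p ≤ q →
      u ^ q * v ^ p ≤ v ^ q * u ^ p := by
    intro u v hu huv p q hpq
    obtain ⟨k, rfl⟩ := Nat.exists_eq_add_of_le hpq
    have hv : 0 < v := hu.trans_le huv
    have h1 : u ^ k ≤ v ^ k := pow_le_pow_left₀ hu.le huv k
    have h2 : (0:ℝ) ≤ u ^ p * v ^ p := by positivity
    calc u ^ (p + k) * v ^ p = (u ^ p * v ^ p) * u ^ k := by ring
      _ ≤ (u ^ p * v ^ p) * v ^ k := by nlinarith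
      _ = v ^ (p + k) * u ^ p := by ring
  rcases le_total n m with h | h
  · have h1 := aux s t hs hst n m h
    have h2 := aux b a hb hba n m h
    nlinarith
  · have h1 := aux s t hs hst m n h
    have h2 := aux b a hb hba m n h
    nlinarith

private lemma key_div (s t a b : ℝ) (hs : 0 < s) (hst : s ≤ t) (hb : 0 < b) (hba : b ≤ a)
    (m n : ℕ) :
    (s / b) ^ m * (t / a) ^ n + (s / b) ^ n * (t / a) ^ m
      ≤ (t / b) ^ m * (s / a) ^ n + (t / b) ^ n * (s / a) ^ m := by
  have ha : 0 < a := hb.trans_le hba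
  have hbm : (0:ℝ) < b ^ m := pow_pos hb m
  have hbn : (0:ℝ) < b ^ n := pow_pos hb n
  have ham : (0:ℝ) < a ^ m := pow_pos ha m
  have han : (0:ℝ) < a ^ n := pow_pos ha n
  rw [← sub_nonneg]
  have heq : (t / b) ^ m * (s / a) ^ n + (t / b) ^ n * (s / a) ^ m
      - ((s / b) ^ m * (t / a) ^ n + (s / b) ^ n * (t / a) ^ m)
      = (t ^ m * s ^ n - s ^ m * t ^ n) * (b ^ n * a ^ m - b ^ m * a ^ n)
        / (b ^ m * a ^ n * (b ^ n * a ^ m)) := by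
    simp only [div_pow]
    field_simp
    ring
  rw [heq]
  exact div_nonneg (key_prod s t a b hs hst hb hba m n) (by positivity)

theorem Fj2_nonpos
    (C : ℕ → ℝ) (s t a b : ℝ)
    (hC : ∀ n : ℕ, 1 ≤ n → 0 ≤ C n)
    (hs : 0 < s) (hst : s < t) (hb : 0 < b) (hba : b < a)
    (R : ℝ → ℝ) (hR : ∀ x : ℝ, R x = ∑' n : ℕ, C (n + 1) * x ^ n)
    (hsa : Summable fun n : ℕ => |C (n + 1) * (s / a) ^ n|)
    (hsb : Summable fun n : ℕ => |C (n + 1) * (s / b) ^ n|)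
    (hta : Summable fun n : ℕ => |C (n + 1) * (t / a) ^ n|)
    (htb : Summable fun n : ℕ => |C (n + 1) * (t / b) ^ n|) :
    R (s / b) * R (t / a) ≤ R (t / b) * R (s / a) := by
  set c : ℕ → ℝ := fun n => C (n + 1) with hc
  have hcn : ∀ n, 0 ≤ c n := fun n => hC (n + 1) (Nat.le_add_left 1 n)
  -- summability of each series
  have Ssa : Summable fun n : ℕ => c n * (s / a) ^ n := by
    apply Summable.of_abs; exact hsa
  have Ssb : Summable fun n : ℕ => c n * (s / b) ^ n := by
    apply Summable.of_abs; exact hsb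
  have Sta : Summable fun n : ℕ => c n * (t / a) ^ n := by
    apply Summable.of_abs; exact hta
  have Stb : Summable fun n : ℕ => c n * (t / b) ^ n := by
    apply Summable.of_abs; exact htb
  -- product summability
  have norm_of : ∀ (x : ℝ), (Summable fun n : ℕ => |c n * x ^ n|) →
      Summable fun n : ℕ => ‖c n * x ^ n‖ := by
    intro x h; simpa only [Real.norm_eq_abs] using h
  have SF : Summable fun p : ℕ × ℕ => (c p.1 * (s / b) ^ p.1) * (c p.2 * (t / a) ^ p.2) := by
    have h := Summable.mul_norm (R := ℝ) (f := fun n : ℕ => c n * (s / b) ^ n)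
      (g := fun n : ℕ => c n * (t / a) ^ n) (norm_of _ hsb) (norm_of _ hta)
    exact h.of_norm
  have SG : Summable fun p : ℕ × ℕ => (c p.1 * (t / b) ^ p.1) * (c p.2 * (s / a) ^ p.2) := by
    have h := Summable.mul_norm (R := ℝ) (f := fun n : ℕ => c n * (t / b) ^ n)
      (g := fun n : ℕ => c n * (s / a) ^ n) (norm_of _ htb) (norm_of _ hsa)
    exact h.of_norm
  set F : ℕ × ℕ → ℝ := fun p => (c p.1 * (s / b) ^ p.1) * (c p.2 * (t / a) ^ p.2) with hF
  set G : ℕ × ℕ → ℝ := fun p => (c p.1 * (t / b) ^ p.1) * (c p.2 * (s / a) ^ p.2) with hG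
  have hRF : R (s / b) * R (t / a) = ∑' p : ℕ × ℕ, F p := by
    rw [hR, hR]; exact Summable.tsum_mul_tsum Ssb Sta SF
  have hRG : R (t / b) * R (s / a) = ∑' p : ℕ × ℕ, G p := by
    rw [hR, hR]; exact Summable.tsum_mul_tsum Stb Ssa SG
  -- symmetrize
  have e : ℕ × ℕ ≃ ℕ × ℕ := Equiv.prodComm ℕ ℕ
  have SFs : Summable fun p : ℕ × ℕ => F p.swap :=
    ((Equiv.prodComm ℕ ℕ).summable_iff.mpr SF)
  have SGs : Summable fun p : ℕ × ℕ => G p.swap :=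
    ((Equiv.prodComm ℕ ℕ).summable_iff.mpr SG)
  have hFs : (∑' p : ℕ × ℕ, F p.swap) = ∑' p : ℕ × ℕ, F p :=
    (Equiv.prodComm ℕ ℕ).tsum_eq F
  have hGs : (∑' p : ℕ × ℕ, G p.swap) = ∑' p : ℕ × ℕ, G p :=
    (Equiv.prodComm ℕ ℕ).tsum_eq G
  have pointwise : ∀ p : ℕ × ℕ, F p + F p.swap ≤ G p + G p.swap := by
    rintro ⟨m, n⟩
    have hk := key_div s t a b hs hst.le hb hba.le m n
    have hcc : (0:ℝ) ≤ c m * c n := mul_nonneg (hcn m) (hcn n)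
    have := mul_le_mul_of_nonneg_left hk hcc
    simp only [hF, hG, Prod.swap]
    nlinarith [this]
  have hsum : (∑' p : ℕ × ℕ, (F p + F p.swap)) ≤ ∑' p : ℕ × ℕ, (G p + G p.swap) :=
    Summable.tsum_le_tsum pointwise (SF.add SFs) (SG.add SGs)
  rw [Summable.tsum_add SF SFs, Summable.tsum_add SG SGs, hFs, hGs] at hsum
  rw [hRF, hRG]
  linarith
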